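/- For n ≥ 5, let t₀ = [n−1, n, n, …, n] (mapping 1 to n−1 and everything else to n), let U¹ be the transformations t of Q = {1,…,n} with (n−1)t = nt = n, 1 ∉ rng(t), and 1t = n, and let U³ be those with (n−1)t = nt = n, 1t ∉ {n−1,n}, 1 ∉ rng(t), and it ∈ {n−1,n} for all i ≠ 1. Then U¹ ∪ {t₀} ∪ U³ is a semigroup of cardinality (n−1)^{n−3} + (n−3)·2^{n−3} + 1. -/

import Mathlib

/-- `t ∈ U¹_n`: `(n-1)t = nt = n`, `1 ∉ rng t`, and `1t = n`.
States `{1,…,n}` are encoded as `Fin n` (state `i` ↦ index `i-1`). -/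
def UOne (n : ℕ) (t : Fin n → Fin n) : Prop :=
  (∀ q : Fin n, q.val = n - 2 ∨ q.val = n - 1 → (t q).val = n - 1) ∧
  (∀ q : Fin n, (t q).val ≠ 0) ∧
  (∀ q : Fin n, q.val = 0 → (t q).val = n - 1)

/-- `t ∈ U³_n`: `(n-1)t = nt = n`, `1 ∉ rng t`, `1t ∉ {n-1, n}`, and
`it ∈ {n-1, n}` for all `i ≠ 1`. -/
def UThree (n : ℕ) (t : Fin n → Fin n) : Prop :=
  (∀ q : Fin n, q.val = n - 2 ∨ q.val = n - 1 → (t q).val = n - 1) ∧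
  (∀ q : Fin n, (t q).val ≠ 0) ∧
  (∀ q : Fin n, q.val = 0 → (t q).val ≠ n - 2 ∧ (t q).val ≠ n - 1) ∧
  (∀ i : Fin n, i.val ≠ 0 → (t i).val = n - 2 ∨ (t i).val = n - 1)

/-- `t₀ = [n-1, n, n, …, n]`: maps state `1` to `n-1` and everything else to `n`. -/
def tZero (n : ℕ) (hn : 2 ≤ n) : Fin n → Fin n :=
  fun q => if q.val = 0 then ⟨n - 2, by omega⟩ else ⟨n - 1, by omega⟩

open Finset

lemma classify (n : ℕ) (hn : 5 ≤ n) (u : Fin n → Fin n)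
    (h1 : ∀ q : Fin n, q.val ≠ 0 → (u q).val = n - 1)
    (h0 : (u ⟨0, by omega⟩).val ≠ 0) :
    UOne n u ∨ u = tZero n (by linarith) ∨ UThree n u := by
  have hq0 : ∀ q : Fin n, q.val = 0 → q = ⟨0, by omega⟩ := fun q h => Fin.ext h
  by_cases hv1 : (u ⟨0, by omega⟩).val = n - 1
  · left
    refine ⟨fun q hq => h1 q (by omega), fun q => ?_, fun q hq => ?_⟩
    · by_cases h : q.val = 0
      · rw [hq0 q h]; exact h0
      · rw [h1 q h]; omega
    · rw [hq0 q hq]; exact hv1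
  by_cases hv2 : (u ⟨0, by omega⟩).val = n - 2
  · right; left
    funext q
    by_cases h : q.val = 0
    · rw [hq0 q h]
      exact Fin.ext (by simpa [tZero] using hv2)
    · exact Fin.ext (by simp [tZero, h, h1 q h])
  · right; right
    refine ⟨fun q hq => h1 q (by omega), fun q => ?_, fun q hq => ?_,
      fun i hi => Or.inr (h1 i hi)⟩
    · by_cases h : q.val = 0
      · rw [hq0 q h]; exact h0
      · rw [h1 q h]; omega
    · rw [hq0 q hq]; exact ⟨hv2, hv1⟩

lemma closure14 (n : ℕ) (hn : 5 ≤ n) (s t : Fin n → Fin n)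
    (hs : UOne n s ∨ s = tZero n (by linarith) ∨ UThree n s)
    (ht : UOne n t ∨ t = tZero n (by linarith) ∨ UThree n t) :
    UOne n (t ∘ s) ∨ (t ∘ s) = tZero n (by linarith) ∨ UThree n (t ∘ s) := by
  rcases hs with hs | rfl | hs
  · rcases ht with ht | rfl | ht
    · -- U¹ ∘ U¹
      exact Or.inl ⟨fun q hq => ht.1 (s q) (Or.inr (hs.1 q hq)), fun q => ht.2.1 (s q),
        fun q hq => ht.1 (s q) (Or.inr (hs.2.2 q hq))⟩
    · -- t₀ ∘ U¹
      apply classify n hn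
      · intro q _
        simp only [Function.comp_apply, tZero, if_neg (hs.2.1 q)]
      · simp only [Function.comp_apply, tZero, if_neg (hs.2.1 _)]
        omega
    · -- U³ ∘ U¹
      exact Or.inl ⟨fun q hq => ht.1 (s q) (Or.inr (hs.1 q hq)), fun q => ht.2.1 (s q),
        fun q hq => ht.1 (s q) (Or.inr (hs.2.2 q hq))⟩
  · -- s = t₀
    have hz : ∀ q : Fin n, (tZero n (by omega) q).val = n - 2 ∨
        (tZero n (by omega) q).val = n - 1 := by
      intro q; simp only [tZero]; split <;> simp
    have hz1 : ∀ x : Fin n, x.val ≠ 0 → (tZero n (by omega) x).val = n - 1 := by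
      intro x hx; simp [tZero, hx]
    have hz2 : ∀ q : Fin n, (tZero n (by omega) q).val ≠ 0 := by
      intro q; rcases hz q with h | h <;> omega
    rcases ht with ht | rfl | ht
    · apply classify n hn
      · intro q _; exact ht.1 _ (hz q)
      · simp only [Function.comp_apply]; rw [ht.1 _ (hz _)]; omega
    · apply classify n hn
      · intro q _
        simp only [Function.comp_apply]
        exact hz1 _ (hz2 q)
      · simp only [Function.comp_apply]
        rw [hz1 _ (hz2 _)]; omega
    · apply classify n hn
      · intro q _; exact ht.1 _ (hz q)
      · simp only [Function.comp_apply]; rw [ht.1 _ (hz _)]; omega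
  · -- s ∈ U³
    have hz : ∀ q : Fin n, q.val ≠ 0 → (s q).val = n - 2 ∨ (s q).val = n - 1 :=
      hs.2.2.2
    rcases ht with ht | rfl | ht
    · apply classify n hn
      · intro q hq; exact ht.1 (s q) (hz q hq)
      · exact ht.2.1 _
    · apply classify n hn
      · intro q hq
        simp only [Function.comp_apply, tZero]
        rcases hz q hq with h | h <;> rw [if_neg (by omega)]
      · simp only [Function.comp_apply, tZero, if_neg (hs.2.1 _)]
        omega
    · apply classify n hn
      · intro q hq; exact ht.1 (s q) (hz q hq)
      · exact ht.2.1 _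

lemma card3 (n : ℕ) (hn : 5 ≤ n) :
    (univ.filter (fun v : Fin n => v.val = 0 ∨ v.val = n - 2 ∨ v.val = n - 1)).card = 3 := by
  have h : (univ.filter (fun v : Fin n => v.val = 0 ∨ v.val = n - 2 ∨ v.val = n - 1))
      = {(⟨0, by omega⟩ : Fin n), ⟨n - 2, by omega⟩, ⟨n - 1, by omega⟩} := by
    ext v; simp [Fin.ext_iff]
  rw [h, card_insert_of_notMem (by simp [Fin.ext_iff]; omega),
    card_insert_of_notMem (by simp [Fin.ext_iff]; omega), card_singleton]

lemma card_not3 (n : ℕ) (hn : 5 ≤ n) (p : Fin n → Prop) [DecidablePred p]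
    (hp : ∀ v, p v ↔ ¬(v.val = 0 ∨ v.val = n - 2 ∨ v.val = n - 1)) :
    (univ.filter p).card = n - 3 := by
  classical
  have h := Finset.card_filter_add_card_filter_not
    (s := (univ : Finset (Fin n)))
    (p := fun v : Fin n => v.val = 0 ∨ v.val = n - 2 ∨ v.val = n - 1)
  rw [card3 n hn, card_univ, Fintype.card_fin] at h
  have he : univ.filter p
      = univ.filter (fun v : Fin n => ¬(v.val = 0 ∨ v.val = n - 2 ∨ v.val = n - 1)) := by
    ext v; simp [hp v]
  rw [he]
  omega

lemma card_ne0 (n : ℕ) (hn : 5 ≤ n) :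
    (univ.filter (fun v : Fin n => v.val ≠ 0)).card = n - 1 := by
  have h : (univ.filter (fun v : Fin n => v.val ≠ 0)) = univ.erase ⟨0, by omega⟩ := by
    ext v; simp [Fin.ext_iff]
  rw [h, card_erase_of_mem (mem_univ _), card_univ, Fintype.card_fin]

lemma prod_if_one {M : Type*} [CommMonoid M] {n : ℕ} (c : M) (p : Fin n → Prop)
    [DecidablePred p] :
    (∏ i : Fin n, (if p i then 1 else c)) = c ^ (univ.filter (fun i => ¬ p i)).card := by
  rw [← Finset.prod_filter_mul_prod_filter_not univ p]
  rw [Finset.prod_eq_one (fun i hi => by simp [(mem_filter.mp hi).2]),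
    Finset.prod_congr rfl (fun i hi => by simp [(mem_filter.mp hi).2] : ∀ i ∈ univ.filter (fun i => ¬ p i), (if p i then 1 else c) = c),
    Finset.prod_const, one_mul]

lemma card_uone (n : ℕ) (hn : 5 ≤ n) :
    {t : Fin n → Fin n | UOne n t}.ncard = (n - 1) ^ (n - 3) := by
  classical
  set V : Fin n → Finset (Fin n) := fun i =>
    if i.val = 0 ∨ i.val = n - 2 ∨ i.val = n - 1 then {(⟨n - 1, by omega⟩ : Fin n)}
    else univ.filter (fun v => v.val ≠ 0) with hV
  have hset : {t : Fin n → Fin n | UOne n t} = ↑(Fintype.piFinset V) := by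
    ext t
    simp only [Set.mem_setOf_eq, Finset.mem_coe, Fintype.mem_piFinset]
    constructor
    · rintro ⟨hA, hB, hC⟩ i
      by_cases h : i.val = 0 ∨ i.val = n - 2 ∨ i.val = n - 1
      · rw [hV]; simp only [if_pos h, mem_singleton]
        apply Fin.ext
        rcases h with h | h
        · exact hC i h
        · exact hA i h
      · rw [hV]; simp only [if_neg h, mem_filter, mem_univ, true_and]
        exact hB i
    · intro h
      have key : ∀ q : Fin n, q.val = 0 ∨ q.val = n - 2 ∨ q.val = n - 1 →
          (t q).val = n - 1 := by
        intro q hq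
        have := h q
        simp only [hV] at this; simp only [if_pos hq, mem_singleton] at this
        rw [this]
      refine ⟨fun q hq => key q (Or.inr hq), fun q => ?_, fun q hq => key q (Or.inl hq)⟩
      by_cases hc : q.val = 0 ∨ q.val = n - 2 ∨ q.val = n - 1
      · rw [key q hc]; omega
      · have := h q
        simp only [hV] at this; simp only [if_neg hc, mem_filter, mem_univ, true_and] at this
        exact this
  rw [hset, Set.ncard_coe_finset, Fintype.card_piFinset]
  have hc : ∀ i : Fin n, (V i).card
      = if i.val = 0 ∨ i.val = n - 2 ∨ i.val = n - 1 then 1 else n - 1 := by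
    intro i
    rw [hV]
    by_cases h : i.val = 0 ∨ i.val = n - 2 ∨ i.val = n - 1
    · simp [if_pos h]
    · simp only [if_neg h]
      exact card_ne0 n hn
  rw [Finset.prod_congr rfl (fun i _ => hc i), prod_if_one,
    card_not3 n hn _ (fun v => Iff.rfl)]

lemma card_uthree (n : ℕ) (hn : 5 ≤ n) :
    {t : Fin n → Fin n | UThree n t}.ncard = (n - 3) * 2 ^ (n - 3) := by
  classical
  set V : Fin n → Finset (Fin n) := fun i =>
    if i.val = 0 then univ.filter (fun v => v.val ≠ 0 ∧ v.val ≠ n - 2 ∧ v.val ≠ n - 1)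
    else if i.val = n - 2 ∨ i.val = n - 1 then {(⟨n - 1, by omega⟩ : Fin n)}
    else {(⟨n - 2, by omega⟩ : Fin n), (⟨n - 1, by omega⟩ : Fin n)} with hV
  have hset : {t : Fin n → Fin n | UThree n t} = ↑(Fintype.piFinset V) := by
    ext t
    simp only [Set.mem_setOf_eq, Finset.mem_coe, Fintype.mem_piFinset]
    constructor
    · rintro ⟨hA, hB, hC, hD⟩ i
      simp only [hV]
      by_cases h0 : i.val = 0
      · simp only [if_pos h0, mem_filter, mem_univ, true_and]
        exact ⟨hB i, hC i h0⟩
      · by_cases h1 : i.val = n - 2 ∨ i.val = n - 1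
        · simp only [if_neg h0, if_pos h1, mem_singleton]
          exact Fin.ext (hA i h1)
        · simp only [if_neg h0, if_neg h1, mem_insert, mem_singleton, Fin.ext_iff]
          exact hD i h0
    · intro h
      have key0 : (t ⟨0, by omega⟩).val ≠ 0 ∧ (t ⟨0, by omega⟩).val ≠ n - 2 ∧
          (t ⟨0, by omega⟩).val ≠ n - 1 := by
        have := h ⟨0, by omega⟩
        simp only [hV] at this
        simpa using this
      have keyD : ∀ i : Fin n, i.val ≠ 0 → (t i).val = n - 2 ∨ (t i).val = n - 1 := by
        intro i hi
        have := h i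
        simp only [hV] at this
        rw [if_neg hi] at this
        by_cases h1 : i.val = n - 2 ∨ i.val = n - 1
        · rw [if_pos h1, mem_singleton] at this
          exact Or.inr (by rw [this])
        · rw [if_neg h1] at this
          simpa [Fin.ext_iff] using this
      have keyA : ∀ q : Fin n, q.val = n - 2 ∨ q.val = n - 1 → (t q).val = n - 1 := by
        intro q hq
        have hq0 : ¬ q.val = 0 := by omega
        have := h q
        simp only [hV] at this
        rw [if_neg hq0, if_pos hq, mem_singleton] at this
        rw [this]
      refine ⟨keyA, fun q => ?_, fun q hq => ?_, keyD⟩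
      · by_cases h0 : q.val = 0
        · have : q = ⟨0, by omega⟩ := Fin.ext h0
          rw [this]; exact key0.1
        · rcases keyD q h0 with h | h <;> omega
      · have : q = ⟨0, by omega⟩ := Fin.ext hq
        rw [this]; exact ⟨key0.2.1, key0.2.2⟩
  rw [hset, Set.ncard_coe_finset, Fintype.card_piFinset]
  have hc : ∀ i : Fin n, (V i).card
      = (if i.val = 0 then n - 3 else 1) *
        (if i.val = 0 ∨ i.val = n - 2 ∨ i.val = n - 1 then 1 else 2) := by
    intro i
    simp only [hV]
    by_cases h0 : i.val = 0
    · simp only [if_pos h0, if_pos (Or.inl h0), mul_one]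
      exact card_not3 n hn _ (fun v => by constructor <;> intro h <;> omega)
    · by_cases h1 : i.val = n - 2 ∨ i.val = n - 1
      · simp only [if_neg h0, if_pos h1, if_pos (Or.inr h1), card_singleton, one_mul]
      · simp only [if_neg h0, if_neg h1,
          if_neg (show ¬(i.val = 0 ∨ i.val = n - 2 ∨ i.val = n - 1) by tauto), one_mul]
        rw [card_insert_of_notMem (by simp [Fin.ext_iff]; omega), card_singleton]
  rw [Finset.prod_congr rfl (fun i _ => hc i), Finset.prod_mul_distrib, prod_if_one,
    card_not3 n hn _ (fun v => Iff.rfl)]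
  have : (∏ i : Fin n, (if (i : Fin n).val = 0 then n - 3 else 1)) = n - 3 := by
    have he : ∀ i : Fin n, (if i.val = 0 then n - 3 else 1)
        = (if i = (⟨0, by omega⟩ : Fin n) then n - 3 else 1) := by
      intro i
      by_cases h : i.val = 0
      · rw [if_pos h, if_pos (Fin.ext h)]
      · rw [if_neg h, if_neg (fun hh => h (by rw [hh]))]
    rw [Finset.prod_congr rfl (fun i _ => he i), Finset.prod_ite_eq' univ _ (fun _ => n - 3),
      if_pos (mem_univ _)]
  rw [this]

/-- For `n ≥ 5`, `U¹ ∪ {t₀} ∪ U³` is closed under composition and has cardinality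
`(n-1)^(n-3) + (n-3)·2^(n-3) + 1`. -/
theorem statement14 (n : ℕ) (hn : 5 ≤ n) :
    (∀ s t : Fin n → Fin n,
      (UOne n s ∨ s = tZero n (by omega) ∨ UThree n s) →
      (UOne n t ∨ t = tZero n (by omega) ∨ UThree n t) →
      (UOne n (t ∘ s) ∨ (t ∘ s) = tZero n (by omega) ∨ UThree n (t ∘ s))) ∧
    Nat.card {t : Fin n → Fin n // UOne n t ∨ t = tZero n (by omega) ∨ UThree n t} =
      (n - 1) ^ (n - 3) + (n - 3) * 2 ^ (n - 3) + 1 := by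
  refine ⟨closure14 n hn, ?_⟩
  classical
  have hd1 : ∀ t : Fin n → Fin n, UOne n t → t ≠ tZero n (by omega) := by
    intro t ht heq
    have h1 : (t ⟨0, by omega⟩).val = n - 1 := ht.2.2 _ rfl
    rw [heq] at h1
    simp [tZero] at h1
    omega
  have hd2 : ∀ t, UOne n t → ¬ UThree n t := fun t h1 h3 =>
    (h3.2.2.1 ⟨0, by omega⟩ rfl).2 (h1.2.2 _ rfl)
  have hd3 : ¬ UThree n (tZero n (by omega)) := by
    intro h
    have h1 := (h.2.2.1 ⟨0, by omega⟩ rfl).1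
    simp [tZero] at h1
  have hsets : {t : Fin n → Fin n | UOne n t ∨ t = tZero n (by omega) ∨ UThree n t}
      = {t | UOne n t} ∪ ({tZero n (by omega)} ∪ {t | UThree n t}) := by
    ext t
    simp only [Set.mem_setOf_eq, Set.mem_union, Set.mem_singleton_iff]
  have h0 : Nat.card {t : Fin n → Fin n // UOne n t ∨ t = tZero n (by omega) ∨ UThree n t}
      = ({t : Fin n → Fin n | UOne n t ∨ t = tZero n (by omega) ∨ UThree n t}).ncard :=
    Nat.card_coe_set_eq _
  rw [h0, hsets]
  rw [Set.ncard_union_eq ?dj1 (Set.toFinite _) (Set.toFinite _),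
    Set.ncard_union_eq ?dj2 (Set.toFinite _) (Set.toFinite _)]
  case dj1 =>
    rw [Set.disjoint_left]
    rintro t ht (rfl | ht3)
    · exact hd1 _ ht rfl
    · exact hd2 _ ht ht3
  case dj2 =>
    rw [Set.disjoint_left]
    rintro t rfl ht3
    exact hd3 ht3
  rw [card_uone n hn, card_uthree n hn, Set.ncard_singleton]
  omega
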